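/- Let M be the arc-link-coverage matrix of a WDTAP instance whose oriented tree T is an arborescence rooted at r (all arcs point away from r, or all point towards r). Then M is a network matrix and hence totally unimodular. -/
import Mathlib


open scoped Classical

/-- A tree on vertex set `V`, rooted at `root`, encoded via the parent function.
Every non-root vertex `z` corresponds to the unique tree edge/arc `a_z` between
`z` and `parent z`. -/
structure ArcTree (V : Type*) where
  root : V
  parent : V → V
  parent_root : parent root = root
  reaches_root : ∀ v : V, ∃ n : ℕ, parent^[n] v = root

namespace ArcTree

variable {V : Type*}

/-- `x` is an ancestor of `y` (possibly `x = y`). -/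
def anc (T : ArcTree V) (x y : V) : Prop := ∃ n : ℕ, T.parent^[n] y = x

/-- The arc `a_z` (between `z` and `parent z`, for `z ≠ root`) lies on the
tree path between `u` and `v`. -/
def arcOnPath (T : ArcTree V) (u v z : V) : Prop :=
  z ≠ T.root ∧ ¬ (T.anc z u ↔ T.anc z v)

/-- The vertex `x` lies on the tree path between `u` and `v`. -/
def onPath (T : ArcTree V) (u v x : V) : Prop :=
  (T.anc x u ∨ T.anc x v) ∧ ∀ z, T.anc z u → T.anc z v → T.anc z x

/-- `x` is an inner vertex of the tree path between `u` and `v`. -/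
def innerOnPath (T : ArcTree V) (u v x : V) : Prop :=
  T.onPath u v x ∧ x ≠ u ∧ x ≠ v

/-- `w` is the least common ancestor of `u` and `v`. -/
def isLca (T : ArcTree V) (u v w : V) : Prop :=
  T.anc w u ∧ T.anc w v ∧ ∀ z, T.anc z u → T.anc z v → T.anc z w

end ArcTree

section Cover

variable {V : Type*}

/- Orientation convention: `up z = true` means the arc `a_z` is directed from `z` to
`parent z` (an up-arc, pointing towards the root); `up z = false` means it is directed
from `parent z` to `z` (a down-arc). -/

/-- The directed link `ℓ = (u, v)` covers the arc `a_z`, i.e. `a_z` is a backward arc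
of the tree path from `u` to `v` (equivalently, the walk from `v` back to `u`
traverses `a_z` in its forward direction). -/
def covers (T : ArcTree V) (up : V → Bool) (ℓ : V × V) (z : V) : Prop :=
  z ≠ T.root ∧
    ((T.anc z ℓ.2 ∧ ¬ T.anc z ℓ.1 ∧ up z = true) ∨
     (T.anc z ℓ.1 ∧ ¬ T.anc z ℓ.2 ∧ up z = false))

/-- The link `ℓ = (u,v)` covers the arc `a_z` in the wrong direction, i.e. `a_z` is a
forward arc of the tree path from `u` to `v`. -/
def wcovers (T : ArcTree V) (up : V → Bool) (ℓ : V × V) (z : V) : Prop :=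
  z ≠ T.root ∧
    ((T.anc z ℓ.1 ∧ ¬ T.anc z ℓ.2 ∧ up z = true) ∨
     (T.anc z ℓ.2 ∧ ¬ T.anc z ℓ.1 ∧ up z = false))

/-- `ℓ'` is a shadow of `ℓ`: the endpoints of `ℓ'` lie, in this order, on the tree path
of `ℓ`. -/
def IsShadow (T : ArcTree V) (ℓ ℓ' : V × V) : Prop :=
  T.onPath ℓ.1 ℓ.2 ℓ'.1 ∧ T.onPath ℓ'.1 ℓ.2 ℓ'.2

/-- `x` is an inner vertex of the path of the generic shadow of `ℓ` (the minimal shadow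
with the same directed coverage): `x` lies on `P_ℓ` and `ℓ` covers arcs on both sides
of `x`. -/
def innerGeneric (T : ArcTree V) (up : V → Bool) (ℓ : V × V) (x : V) : Prop :=
  T.onPath ℓ.1 ℓ.2 x ∧
    (∃ z, covers T up ℓ z ∧ T.arcOnPath ℓ.1 x z) ∧
    (∃ z, covers T up ℓ z ∧ T.arcOnPath x ℓ.2 z)

/-- The arc `a_z` (lying in the subtree of `v`) is visible to `v` with respect to the
link set `L'`. -/
def visibleArc (T : ArcTree V) (up : V → Bool) (L' : Set (V × V)) (v z : V) : Prop :=
  T.anc v z ∧ z ≠ v ∧ ∃ ℓ ∈ L', covers T up ℓ z ∧ innerGeneric T up ℓ v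

/-- A set of arcs (encoded by their lower endpoints) is ancestor-free: no arc of the
set lies on the path from another arc's apex (top endpoint) to the root. -/
def AncestorFree (T : ArcTree V) (S : Set V) : Prop :=
  ∀ z ∈ S, ∀ z' ∈ S, z ≠ z' → ¬ T.anc z' (T.parent z)

/-- The visible up-width of `v` w.r.t. the link set `L'` is at most `k`. -/
def upWidthLE (T : ArcTree V) (up : V → Bool) (L' : Set (V × V)) (v : V) (k : ℕ) : Prop :=
  ∀ S : Finset V, AncestorFree T (S : Set V) →
    (∀ z ∈ S, up z = true ∧ visibleArc T up L' v z) → S.card ≤ k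

/-- The visible down-width of `v` w.r.t. the link set `L'` is at most `k`. -/
def downWidthLE (T : ArcTree V) (up : V → Bool) (L' : Set (V × V)) (v : V) (k : ℕ) : Prop :=
  ∀ S : Finset V, AncestorFree T (S : Set V) →
    (∀ z ∈ S, up z = false ∧ visibleArc T up L' v z) → S.card ≤ k

/-- The link `ℓ` points into the subtree `T_v`. -/
def pointsInto (T : ArcTree V) (v : V) (ℓ : V × V) : Prop :=
  T.anc v ℓ.2 ∧ ℓ.2 ≠ v ∧ ¬ T.anc v ℓ.1

/-- The link `ℓ` points out of the subtree `T_v`. -/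
def pointsOut (T : ArcTree V) (v : V) (ℓ : V × V) : Prop :=
  T.anc v ℓ.1 ∧ ℓ.1 ≠ v ∧ ¬ T.anc v ℓ.2

/-- `v` is up-independent w.r.t. the link set `L'`: every link either covers no up-arc
of the subtree `T_v`, or its whole coverage lies inside `T_v`. -/
def upIndep (T : ArcTree V) (up : V → Bool) (L' : Set (V × V)) (v : V) : Prop :=
  ∀ ℓ ∈ L', (¬ ∃ z, covers T up ℓ z ∧ T.anc v z ∧ z ≠ v ∧ up z = true) ∨
    (∀ z, covers T up ℓ z → T.anc v z ∧ z ≠ v)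

/-- `v` is down-independent w.r.t. the link set `L'`. -/
def downIndep (T : ArcTree V) (up : V → Bool) (L' : Set (V × V)) (v : V) : Prop :=
  ∀ ℓ ∈ L', (¬ ∃ z, covers T up ℓ z ∧ T.anc v z ∧ z ≠ v ∧ up z = false) ∨
    (∀ z, covers T up ℓ z → T.anc v z ∧ z ≠ v)

/-- A feasible (integral) solution: every arc is covered by some link of `F`. -/
def Feasible (T : ArcTree V) (up : V → Bool) (F : Finset (V × V)) : Prop :=
  ∀ z, z ≠ T.root → ∃ ℓ ∈ F, covers T up ℓ z

/-- `F` is shadow-minimal: no link of `F` can be replaced by a proper shadow while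
maintaining feasibility. -/
def ShadowMinimal (T : ArcTree V) (up : V → Bool) (F : Finset (V × V)) : Prop :=
  ∀ ℓ ∈ F, ∀ ℓ' : V × V, IsShadow T ℓ ℓ' → ℓ' ≠ ℓ →
    ¬ Feasible T up (insert ℓ' (F.erase ℓ))

/-- A splitting of the link set: each link is mapped to a set of shadows whose tree
paths partition the arc set of its tree path. -/
def IsSplitting (T : ArcTree V) (σ : V × V → Finset (V × V)) : Prop :=
  ∀ ℓ : V × V,
    (σ ℓ).Nonempty ∧
    (∀ ℓ' ∈ σ ℓ, IsShadow T ℓ ℓ' ∧ (ℓ'.1 ≠ ℓ'.2 ∨ ℓ' = ℓ)) ∧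
    (∀ z, T.arcOnPath ℓ.1 ℓ.2 z ↔ ∃ ℓ' ∈ σ ℓ, T.arcOnPath ℓ'.1 ℓ'.2 z) ∧
    (∀ ℓ₁ ∈ σ ℓ, ∀ ℓ₂ ∈ σ ℓ, ℓ₁ ≠ ℓ₂ →
      ∀ z, T.arcOnPath ℓ₁.1 ℓ₁.2 z → ¬ T.arcOnPath ℓ₂.1 ℓ₂.2 z)

/-- The LP solution obtained from `x` by applying the splitting `σ`. -/
noncomputable def splitSol [Fintype V] (σ : V × V → Finset (V × V)) (x : V × V → ℝ) :
    V × V → ℝ :=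
  fun ℓ' => ∑ ℓ : V × V, if ℓ' ∈ σ ℓ then x ℓ else 0

/-- `x` is a feasible solution of the WDTAP set-covering LP. -/
def FeasLP [Fintype V] (T : ArcTree V) (up : V → Bool) (x : V × V → ℝ) : Prop :=
  (∀ ℓ, 0 ≤ x ℓ) ∧
    ∀ z, z ≠ T.root → 1 ≤ ∑ ℓ : V × V, if covers T up ℓ z then x ℓ else 0

end Cover

section TUAux

variable {V : Type*}

namespace ArcTree

lemma anc_refl (T : ArcTree V) (x : V) : T.anc x x := ⟨0, rfl⟩

lemma anc_trans (T : ArcTree V) {x y z : V} (h1 : T.anc x y) (h2 : T.anc y z) :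
    T.anc x z := by
  obtain ⟨n, hn⟩ := h1
  obtain ⟨m, hm⟩ := h2
  exact ⟨n + m, by rw [Function.iterate_add_apply, hm, hn]⟩

lemma iterate_root (T : ArcTree V) (n : ℕ) : T.parent^[n] T.root = T.root := by
  induction n with
  | zero => rfl
  | succ n ih => rw [Function.iterate_succ_apply', ih, T.parent_root]

lemma anc_root (T : ArcTree V) (x : V) : T.anc T.root x := T.reaches_root x

/-- The depth of a vertex: distance to the root along parents. -/
noncomputable def depth (T : ArcTree V) (x : V) : ℕ := Nat.find (T.reaches_root x)

lemma iterate_depth (T : ArcTree V) (x : V) : T.parent^[T.depth x] x = T.root :=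
  Nat.find_spec (T.reaches_root x)

lemma iterate_eq_root_of_ge (T : ArcTree V) {x : V} {n : ℕ} (h : T.depth x ≤ n) :
    T.parent^[n] x = T.root := by
  have h1 := T.iterate_depth x
  have : T.parent^[n] x = T.parent^[n - T.depth x] (T.parent^[T.depth x] x) := by
    rw [← Function.iterate_add_apply, Nat.sub_add_cancel h]
  rw [this, h1, T.iterate_root]

lemma depth_lt_of_anc (T : ArcTree V) {x y : V} (h : T.anc x y) (hne : x ≠ y) :
    T.depth x < T.depth y := by
  obtain ⟨n, hn⟩ := h
  have hn0 : n ≠ 0 := by rintro rfl; exact hne hn.symm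
  have hy0 : T.depth y ≠ 0 := by
    intro h0
    have : y = T.root := by
      have := T.iterate_depth y; rwa [h0, Function.iterate_zero_apply] at this
    apply hne
    rw [← hn, this, T.iterate_root]
  rcases le_or_gt n (T.depth y) with hle | hgt
  · have : T.parent^[T.depth y - n] x = T.root := by
      rw [← hn, ← Function.iterate_add_apply, Nat.sub_add_cancel hle]
      exact T.iterate_depth y
    have hdx : T.depth x ≤ T.depth y - n := Nat.find_le this
    omega
  · have hx : x = T.root := by rw [← hn]; exact T.iterate_eq_root_of_ge (le_of_lt hgt)
    have hdx : T.depth x = 0 := by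
      have h0 : T.parent^[0] x = T.root := by rw [Function.iterate_zero_apply, hx]
      have hle : T.depth x ≤ 0 := Nat.find_le h0
      omega
    omega

lemma anc_comparable (T : ArcTree V) {a b c : V} (ha : T.anc a c) (hb : T.anc b c) :
    T.anc a b ∨ T.anc b a := by
  obtain ⟨n, hn⟩ := ha
  obtain ⟨m, hm⟩ := hb
  rcases le_total n m with h | h
  · right
    exact ⟨m - n, by rw [← hn, ← Function.iterate_add_apply, Nat.sub_add_cancel h, hm]⟩
  · left
    exact ⟨n - m, by rw [← hm, ← Function.iterate_add_apply, Nat.sub_add_cancel h, hn]⟩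

lemma eq_root_of_iterate_eq (T : ArcTree V) {x : V} {a b : ℕ} (hab : a < b)
    (h : T.parent^[a] x = T.parent^[b] x) : T.parent^[a] x = T.root := by
  set y := T.parent^[a] x with hy
  have hper : T.parent^[b - a] y = y := by
    rw [hy, ← Function.iterate_add_apply, Nat.sub_add_cancel (le_of_lt hab), ← h]
  have hmul : ∀ t, T.parent^[(b - a) * t] y = y := by
    intro t
    induction t with
    | zero => rfl
    | succ t ih => rw [Nat.mul_succ, Function.iterate_add_apply, hper, ih]
  have hpos : 0 < b - a := Nat.sub_pos_of_lt hab
  have hge : T.depth y ≤ (b - a) * T.depth y := Nat.le_mul_of_pos_left _ hpos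
  have := T.iterate_eq_root_of_ge hge
  rw [hmul] at this
  exact this

end ArcTree

open Matrix in
/-- Key determinant lemma: any square matrix whose rows are indexed by non-root
vertices and whose columns are indicators of "ancestor chains"
`{z : anc z v ∧ ¬ anc z u}` has determinant in `{-1, 0, 1}`. -/
lemma chainMat_det (T : ArcTree V) : ∀ (k : ℕ) (f : Fin k → V), (∀ i, f i ≠ T.root) →
    ∀ c : Fin k → V × V,
      (Matrix.of fun i j : Fin k =>
          if T.anc (f i) (c j).2 ∧ ¬ T.anc (f i) (c j).1 then (1 : ℚ) else 0).det
        ∈ Set.range (SignType.cast : SignType → ℚ) := by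
  intro k
  induction k with
  | zero =>
    intro f hf c
    rw [Matrix.det_fin_zero]
    exact ⟨1, rfl⟩
  | succ k ih =>
    intro f hf c
    set A : Matrix (Fin (k + 1)) (Fin (k + 1)) ℚ :=
      Matrix.of fun i j =>
        if T.anc (f i) (c j).2 ∧ ¬ T.anc (f i) (c j).1 then (1 : ℚ) else 0 with hA
    obtain ⟨i0, -, hmax⟩ := Finset.exists_max_image Finset.univ (fun i => T.depth (f i))
      ⟨0, Finset.mem_univ 0⟩
    set z := f i0 with hzdef
    set P : Fin (k + 1) → Prop := fun j => T.anc z (c j).2 ∧ ¬ T.anc z (c j).1 with hPdef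
    by_cases hrow : ∃ j, P j
    swap
    · push_neg at hrow
      refine ⟨0, ?_⟩
      rw [SignType.coe_zero]
      exact (Matrix.det_eq_zero_of_row_eq_zero i0 (fun j => by
        simp only [hA, Matrix.of_apply]
        rw [if_neg (hrow j)])).symm
    have hex : ∀ j : Fin (k + 1), ∃ n, T.anc (T.parent^[n] z) (c j).1 :=
      fun j => ⟨T.depth z, by rw [T.iterate_depth]; exact T.anc_root _⟩
    set d : Fin (k + 1) → ℕ := fun j => Nat.find (hex j) with hddef
    obtain ⟨j', hj'⟩ := hrow
    obtain ⟨j0, hj0mem, hj0min⟩ := Finset.exists_min_image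
      (Finset.univ.filter P) d ⟨j', Finset.mem_filter.mpr ⟨Finset.mem_univ _, hj'⟩⟩
    have hj0P : P j0 := (Finset.mem_filter.mp hj0mem).2
    have hdmin : ∀ j, P j → d j0 ≤ d j := fun j hj =>
      hj0min j (Finset.mem_filter.mpr ⟨Finset.mem_univ _, hj⟩)
    -- key fact A: for any representation `parent^[m] z`, non-ancestry of `(c j).1`
    -- is equivalent to `m < d j`.
    have keyA : ∀ (m : ℕ) (j : Fin (k + 1)),
        (¬ T.anc (T.parent^[m] z) (c j).1) ↔ m < d j := by
      intro m j
      constructor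
      · intro h
        by_contra hm
        push_neg at hm
        refine h (T.anc_trans ?_ (Nat.find_spec (hex j)))
        exact ⟨m - d j, by rw [← Function.iterate_add_apply, Nat.sub_add_cancel hm]⟩
      · intro h
        exact Nat.find_min (hex j) h
    have keyB : ∀ (m : ℕ) (j : Fin (k + 1)), P j → T.anc (T.parent^[m] z) (c j).2 :=
      fun m j hj => T.anc_trans ⟨m, rfl⟩ hj.1
    have hd0pos : 0 < d j0 := by
      rw [← keyA 0 j0, Function.iterate_zero_apply]
      exact hj0P.2
    set v' : V := T.parent^[d j0] z with hv'def
    have keyC : ∀ m : ℕ, T.parent^[m] z ≠ T.root →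
        (T.anc (T.parent^[m] z) v' ↔ d j0 ≤ m) := by
      intro m hroot
      constructor
      · rintro ⟨n, hn⟩
        rw [hv'def, ← Function.iterate_add_apply] at hn
        by_contra hlt
        push_neg at hlt
        have hmlt : m < n + d j0 := lt_of_lt_of_le hlt (Nat.le_add_left _ _)
        exact hroot (T.eq_root_of_iterate_eq hmlt hn.symm)
      · intro h
        exact ⟨m - d j0, by
          rw [hv'def, ← Function.iterate_add_apply, Nat.sub_add_cancel h]⟩
    have hancv'z : T.anc v' z := ⟨d j0, rfl⟩
    -- rows that are not ancestors of z have zero entries in all relevant columns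
    have hcomp : ∀ i : Fin (k + 1), ¬ T.anc (f i) z → ∀ w, T.anc z w → ¬ T.anc (f i) w := by
      intro i hi w hzw hiw
      rcases T.anc_comparable hiw hzw with h | h
      · exact hi h
      · rcases eq_or_ne z (f i) with heq | hne
        · exact hi (by rw [← heq]; exact T.anc_refl z)
        · have h1 := T.depth_lt_of_anc h hne
          have h2 := hmax i (Finset.mem_univ i)
          omega
    -- the modified column data and coefficients
    set c' : Fin (k + 1) → V × V :=
      fun j => if j ≠ j0 ∧ P j then ((c j).1, v') else c j with hc'def
    set cf : Fin (k + 1) → ℚ := fun j => if j ≠ j0 ∧ P j then -1 else 0 with hcfdef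
    set B : Matrix (Fin (k + 1)) (Fin (k + 1)) ℚ :=
      Matrix.of fun i j =>
        if T.anc (f i) (c' j).2 ∧ ¬ T.anc (f i) (c' j).1 then (1 : ℚ) else 0 with hB
    have hBA : ∀ i j, B i j = A i j + cf j * A i j0 := by
      intro i j
      by_cases hj : j ≠ j0 ∧ P j
      · have hcj : c' j = ((c j).1, v') := by rw [hc'def]; simp only [if_pos hj]
        have hcf : cf j = -1 := by rw [hcfdef]; simp only [if_pos hj]
        rw [hcf]
        by_cases hanc : T.anc (f i) z
        · obtain ⟨m, hm⟩ := hanc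
          have hdj : d j0 ≤ d j := hdmin j hj.2
          have e1 : A i j = if m < d j then 1 else 0 := by
            simp only [hA, Matrix.of_apply]
            rw [← hm]
            by_cases h : m < d j
            · rw [if_pos h, if_pos ⟨keyB m j hj.2, (keyA m j).mpr h⟩]
            · rw [if_neg h, if_neg]
              intro hcon
              exact h ((keyA m j).mp hcon.2)
          have e2 : A i j0 = if m < d j0 then 1 else 0 := by
            simp only [hA, Matrix.of_apply]
            rw [← hm]
            by_cases h : m < d j0
            · rw [if_pos h, if_pos ⟨keyB m j0 hj0P, (keyA m j0).mpr h⟩]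
            · rw [if_neg h, if_neg]
              intro hcon
              exact h ((keyA m j0).mp hcon.2)
          have hroot : T.parent^[m] z ≠ T.root := by rw [hm]; exact hf i
          have e3 : B i j = if d j0 ≤ m ∧ m < d j then 1 else 0 := by
            simp only [hB, Matrix.of_apply, hcj]
            rw [← hm]
            by_cases h : d j0 ≤ m ∧ m < d j
            · rw [if_pos h, if_pos ⟨(keyC m hroot).mpr h.1, (keyA m j).mpr h.2⟩]
            · rw [if_neg h, if_neg]
              rintro ⟨h1, h2⟩
              exact h ⟨(keyC m hroot).mp h1, (keyA m j).mp h2⟩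
          rw [e1, e2, e3]
          rcases Nat.lt_or_ge m (d j0) with h1 | h1 <;>
            rcases Nat.lt_or_ge m (d j) with h2 | h2
          · rw [if_neg (by omega), if_pos h2, if_pos h1]; ring
          · omega
          · rw [if_pos ⟨h1, h2⟩, if_pos h2, if_neg (by omega)]; ring
          · rw [if_neg (by omega), if_neg (by omega), if_neg (by omega)]; ring
        · have e1 : A i j = 0 := by
            simp only [hA, Matrix.of_apply]
            rw [if_neg]
            rintro ⟨h1, -⟩
            exact hcomp i hanc _ hj.2.1 h1
          have e2 : A i j0 = 0 := by
            simp only [hA, Matrix.of_apply]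
            rw [if_neg]
            rintro ⟨h1, -⟩
            exact hcomp i hanc _ hj0P.1 h1
          have e3 : B i j = 0 := by
            simp only [hB, Matrix.of_apply, hcj]
            rw [if_neg]
            rintro ⟨h1, -⟩
            exact hanc (T.anc_trans h1 hancv'z)
          rw [e1, e2, e3]; ring
      · have hcj : c' j = c j := by rw [hc'def]; simp only [if_neg hj]
        have hcf : cf j = 0 := by rw [hcfdef]; simp only [if_neg hj]
        rw [hcf, zero_mul, add_zero]
        simp only [hB, hA, Matrix.of_apply, hcj]
    have hdet : B.det = A.det := by
      rw [← Matrix.det_transpose B, ← Matrix.det_transpose A]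
      exact Matrix.det_eq_of_forall_row_eq_smul_add_const cf j0
        (by rw [hcfdef]; simp) (fun i j => hBA j i)
    -- the row i0 of B is the standard basis vector at j0
    have hrowB : ∀ j, B i0 j = if j = j0 then 1 else 0 := by
      intro j
      by_cases hje : j = j0
      · subst hje
        have hcj : c' j = c j := by rw [hc'def]; simp
        have h1 : T.anc (f i0) (c j).2 ∧ ¬ T.anc (f i0) (c j).1 := hj0P
        simp [hB, hcj, h1.1, h1.2]
      · rw [if_neg hje]
        have hne := hje
        by_cases hPj : P j
        · have hcj : c' j = ((c j).1, v') := by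
            rw [hc'def]; simp only [if_pos (⟨hne, hPj⟩ : j ≠ j0 ∧ P j)]
          simp only [hB, Matrix.of_apply, hcj]
          rw [if_neg]
          rintro ⟨h1, -⟩
          have hzroot : T.parent^[0] z ≠ T.root := by
            rw [Function.iterate_zero_apply]; exact hf i0
          have : T.anc (T.parent^[0] z) v' := by rwa [Function.iterate_zero_apply]
          have := (keyC 0 hzroot).mp this
          omega
        · have hcj : c' j = c j := by
            rw [hc'def]
            simp only [if_neg (fun h : j ≠ j0 ∧ P j => hPj h.2)]
          simp only [hB, Matrix.of_apply, hcj]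
          exact if_neg hPj
    -- Laplace expansion along row i0
    have hexp : B.det = (-1 : ℚ) ^ (i0 + j0 : ℕ) *
        (B.submatrix i0.succAbove j0.succAbove).det := by
      rw [Matrix.det_succ_row B i0]
      rw [Finset.sum_eq_single j0]
      · rw [hrowB j0, if_pos rfl, mul_one]
      · intro j _ hne
        rw [hrowB j, if_neg hne, mul_zero, zero_mul]
      · intro h
        exact absurd (Finset.mem_univ j0) h
    have hminor : B.submatrix i0.succAbove j0.succAbove =
        Matrix.of fun i j : Fin k =>
          if T.anc ((f ∘ i0.succAbove) i) ((c' ∘ j0.succAbove) j).2 ∧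
              ¬ T.anc ((f ∘ i0.succAbove) i) ((c' ∘ j0.succAbove) j).1
          then (1 : ℚ) else 0 := rfl
    obtain ⟨s, hs⟩ := ih (f ∘ i0.succAbove) (fun i => hf _) (c' ∘ j0.succAbove)
    rw [hminor] at hexp
    rw [← hdet, hexp, ← hs]
    rcases neg_one_pow_eq_or ℚ (i0 + j0 : ℕ) with h | h
    · exact ⟨s, by rw [h, one_mul]⟩
    · exact ⟨-s, by rw [h, SignType.coe_neg, neg_mul, one_mul]⟩

end TUAux

/-- If the oriented tree of a WDTAP instance is an arborescence rooted
at `r` (all arcs point towards the root, or all point away from it), then the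
arc-link-coverage matrix is (a network matrix and hence) totally unimodular. -/
theorem arborescence_coverage_matrix_totallyUnimodular {V : Type*} [Fintype V]
    (T : ArcTree V) (up : V → Bool)
    (harb : (∀ v : V, up v = true) ∨ (∀ v : V, up v = false))
    (Lk : Type*) (ends : Lk → V × V)
    (M : Matrix {z : V // z ≠ T.root} Lk ℚ)
    (hM : ∀ a ℓ, M a ℓ = if covers T up (ends ℓ) a.1 then 1 else 0) :
    M.IsTotallyUnimodular := by
  rw [Matrix.isTotallyUnimodular_iff]
  intro k f g
  rcases harb with hup | hup
  · have heq : M.submatrix f g = Matrix.of fun i j : Fin k =>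
        if T.anc ((fun i => (f i).1) i) ((fun j => ends (g j)) j).2 ∧
            ¬ T.anc ((fun i => (f i).1) i) ((fun j => ends (g j)) j).1
        then (1 : ℚ) else 0 := by
      ext i j
      rw [Matrix.submatrix_apply, hM, Matrix.of_apply]
      have hiff : covers T up (ends (g j)) (f i).1 ↔
          (T.anc (f i).1 (ends (g j)).2 ∧ ¬ T.anc (f i).1 (ends (g j)).1) := by
        simp [covers, hup, (f i).2]
      exact if_congr hiff rfl rfl
    rw [heq]
    exact chainMat_det T k _ (fun i => (f i).2) _
  · have heq : M.submatrix f g = Matrix.of fun i j : Fin k =>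
        if T.anc ((fun i => (f i).1) i)
              ((fun j => ((ends (g j)).2, (ends (g j)).1)) j).2 ∧
            ¬ T.anc ((fun i => (f i).1) i)
              ((fun j => ((ends (g j)).2, (ends (g j)).1)) j).1
        then (1 : ℚ) else 0 := by
      ext i j
      rw [Matrix.submatrix_apply, hM, Matrix.of_apply]
      have hiff : covers T up (ends (g j)) (f i).1 ↔
          (T.anc (f i).1 (ends (g j)).1 ∧ ¬ T.anc (f i).1 (ends (g j)).2) := by
        simp [covers, hup, (f i).2]
      exact if_congr hiff rfl rfl
    rw [heq]
    exact chainMat_det T k _ (fun i => (f i).2) _
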